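/- Every nonabelian CSA group G is a domain: for every nontrivial normal subgroup K of G, the centralizer C_G(K) is trivial. -/

import Mathlib

def Malnormal {G : Type*} [Group G] (H : Subgroup G) : Prop :=
  ∀ x : G, x ∉ H → ∀ h ∈ H, x⁻¹ * h * x ∈ H → h = 1

/-- Every commutative subgroup is contained in a maximal commutative subgroup (Zorn). -/
lemma exists_maximal_comm {G : Type*} [Group G] (H : Subgroup G) (hH : IsMulCommutative H) :
    ∃ M : Subgroup G, H ≤ M ∧ Maximal (fun S : Subgroup G => IsMulCommutative S) M := by
  have key : ∀ c ⊆ {S : Subgroup G | IsMulCommutative S}, IsChain (· ≤ ·) c → ∀ y ∈ c,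
      ∃ ub ∈ {S : Subgroup G | IsMulCommutative S}, ∀ z ∈ c, z ≤ ub := by
    intro c hc hchain y hy
    refine ⟨sSup c, ⟨⟨fun a b => ?_⟩⟩, fun z hz => le_sSup hz⟩
    have ha := a.2
    have hb := b.2
    rw [Subgroup.mem_sSup_of_directedOn ⟨y, hy⟩ hchain.directedOn] at ha hb
    obtain ⟨S, hS, haS⟩ := ha
    obtain ⟨T, hT, hbT⟩ := hb
    apply Subtype.ext
    push_cast
    rcases hchain.total hS hT with h | h
    · have : IsMulCommutative T := hc hT
      exact Subgroup.mul_comm_of_mem_isMulCommutative T (h haS) hbT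
    · have : IsMulCommutative S := hc hS
      exact Subgroup.mul_comm_of_mem_isMulCommutative S haS (h hbT)
  obtain ⟨M, hle, hmax⟩ := zorn_le_nonempty₀ {S : Subgroup G | IsMulCommutative S} key H hH
  exact ⟨M, hle, hmax⟩

theorem stmt3 {G : Type*} [Group G]
    (hCSA : ∀ M : Subgroup G, Maximal (fun H : Subgroup G => IsMulCommutative H) M → Malnormal M)
    (hna : ¬ ∀ a b : G, a * b = b * a) :
    ∀ K : Subgroup G, K.Normal → K ≠ ⊥ → Subgroup.centralizer (K : Set G) = ⊥ := by
  intro K hKn hKbot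
  rw [Subgroup.eq_bot_iff_forall]
  intro c hc
  by_contra hc1
  rw [Subgroup.mem_centralizer_iff] at hc
  -- zpowers c is commutative
  have hzc : IsMulCommutative (Subgroup.zpowers c) := by
    refine ⟨⟨fun a b => ?_⟩⟩
    obtain ⟨m, hm⟩ := a.2
    obtain ⟨n, hn⟩ := b.2
    apply Subtype.ext
    push_cast
    rw [← hm, ← hn]
    exact ((Commute.refl c).zpow_zpow m n)
  obtain ⟨M, hle, hmax⟩ := exists_maximal_comm (Subgroup.zpowers c) hzc
  have hcM : c ∈ M := hle (Subgroup.mem_zpowers c)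
  -- K ≤ M by malnormality
  have hKM : K ≤ M := by
    intro k hk
    by_contra hkM
    have hcomm : k * c = c * k := hc k hk
    have : k⁻¹ * c * k ∈ M := by
      have : k⁻¹ * c * k = c := by
        rw [mul_assoc, ← hcomm, ← mul_assoc, inv_mul_cancel, one_mul]
      rw [this]; exact hcM
    exact hc1 (hCSA M hmax k hkM c hcM this)
  -- K has a nontrivial element
  obtain ⟨k, hk, hk1⟩ : ∃ k ∈ K, k ≠ 1 := by
    by_contra h
    push_neg at h
    exact hKbot ((Subgroup.eq_bot_iff_forall K).mpr h)
  -- M = ⊤ by malnormality applied to k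
  have hall : ∀ x : G, x ∈ M := by
    intro x
    by_contra hx
    exact hk1 (hCSA M hmax x hx k (hKM hk) (hKM (hKn.conj_mem' k hk x)))
  apply hna
  intro a b
  have := hmax.prop
  exact Subgroup.mul_comm_of_mem_isMulCommutative M (hall a) (hall b)
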